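/- The triangle hyperfield is not doubly distributive: for the triangle addition ⊞ on ℝ≥0, (2⊞1)·(2⊞1) = [1,9], while (2·2)⊞(2·1)⊞(1·2)⊞(1·1) = 4⊞2⊞2⊞1 = [0,9]; in particular these sets are not equal. -/

import Mathlib

open scoped NNReal

/-- The triangle addition on nonnegative reals:
`a⊞b = {c : |a-b| ≤ c ≤ a+b}`. -/
def tadd (a b : ℝ≥0) : Set ℝ≥0 :=
  {c | |(a : ℝ) - (b : ℝ)| ≤ (c : ℝ) ∧ (c : ℝ) ≤ (a : ℝ) + (b : ℝ)}

/-- Elementwise extension of the triangle addition to subsets. -/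
def setTadd (A B : Set ℝ≥0) : Set ℝ≥0 :=
  ⋃ a ∈ A, ⋃ b ∈ B, tadd a b

lemma tadd_mem (a b c : ℝ≥0) : c ∈ tadd a b ↔ |(a:ℝ) - b| ≤ (c:ℝ) ∧ (c:ℝ) ≤ a + b := Iff.rfl

lemma tadd21 : tadd 2 1 = Set.Icc (1:ℝ≥0) 3 := by
  ext c
  rw [tadd_mem, Set.mem_Icc, ← NNReal.coe_le_coe, ← NNReal.coe_le_coe]
  push_cast
  rw [abs_of_nonneg (by norm_num : (0:ℝ) ≤ 2 - 1)]
  constructor <;> intro h <;> constructor <;> linarith [h.1, h.2]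

lemma div3_le (c : ℝ≥0) : c / 3 ≤ c :=
  div_le_self (zero_le) (by norm_num)

lemma img : Set.image2 (· * ·) (Set.Icc (1:ℝ≥0) 3) (Set.Icc (1:ℝ≥0) 3) = Set.Icc (1:ℝ≥0) 9 := by
  ext c
  simp only [Set.mem_image2, Set.mem_Icc]
  constructor
  · rintro ⟨a, ⟨ha1, ha3⟩, b, ⟨hb1, hb3⟩, rfl⟩
    constructor
    · calc (1:ℝ≥0) = 1 * 1 := by ring
        _ ≤ a * b := mul_le_mul' ha1 hb1
    · calc a * b ≤ 3 * 3 := mul_le_mul' ha3 hb3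
        _ = 9 := by norm_num
  · rintro ⟨h1, h9⟩
    refine ⟨max 1 (c / 3), ⟨le_max_left _ _, ?_⟩, c / max 1 (c / 3), ⟨?_, ?_⟩, ?_⟩
    · exact max_le (by norm_num) (by
        rw [div_le_iff₀ (by norm_num : (0:ℝ≥0) < 3)]
        calc c ≤ 9 := h9
          _ = 3 * 3 := by norm_num)
    · rw [le_div_iff₀ (by positivity), one_mul]
      exact max_le h1 ((div3_le c).trans le_rfl)
    · rw [div_le_iff₀ (by positivity)]
      calc c = (c/3) * 3 := by
              rw [div_mul_cancel₀ _ (by norm_num : (3:ℝ≥0) ≠ 0)]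
        _ ≤ max 1 (c/3) * 3 := mul_le_mul_left (le_max_right _ _) _
        _ = 3 * max 1 (c/3) := mul_comm _ _
    · rw [mul_div_cancel₀ _ (by positivity)]


lemma setTadd_mem (A B : Set ℝ≥0) (c : ℝ≥0) :
    c ∈ setTadd A B ↔ ∃ a ∈ A, ∃ b ∈ B, c ∈ tadd a b := by
  simp [setTadd]

lemma tadd42 : tadd 4 2 = Set.Icc (2:ℝ≥0) 6 := by
  ext c
  rw [tadd_mem, Set.mem_Icc, ← NNReal.coe_le_coe, ← NNReal.coe_le_coe]
  push_cast
  rw [abs_of_nonneg (by norm_num : (0:ℝ) ≤ 4 - 2)]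
  constructor <;> intro h <;> constructor <;> linarith [h.1, h.2]

lemma step1 : setTadd (Set.Icc (2:ℝ≥0) 6) {2} = Set.Icc (0:ℝ≥0) 8 := by
  ext c
  rw [setTadd_mem, Set.mem_Icc]
  constructor
  · rintro ⟨a, ha, b, hb, h⟩
    rw [Set.mem_singleton_iff] at hb; subst hb
    rw [Set.mem_Icc] at ha
    refine ⟨zero_le, ?_⟩
    rw [← NNReal.coe_le_coe]
    have h6 : (a:ℝ) ≤ 6 := ha.2
    have := h.2
    push_cast at this ⊢
    linarith
  · rintro ⟨-, h8⟩
    refine ⟨min (c + 2) 6, ?_, 2, rfl, ?_⟩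
    · rw [Set.mem_Icc]
      constructor
      · exact le_min (by simp [le_add_of_nonneg_left]) (by norm_num)
      · exact min_le_right _ _
    · rw [tadd_mem]
      have h8' : (c:ℝ) ≤ 8 := by exact_mod_cast h8
      have hmin : ((min (c + 2) 6 : ℝ≥0) : ℝ) = min ((c:ℝ) + 2) 6 := by push_cast; try ring_nf
      rw [hmin]
      push_cast
      rcases le_total ((c:ℝ) + 2) 6 with h | h
      · rw [min_eq_left h]
        constructor
        · rw [abs_of_nonneg (by linarith [NNReal.coe_nonneg c] : (0:ℝ) ≤ _)]; linarith [NNReal.coe_nonneg c]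
        · linarith
      · rw [min_eq_right h]
        constructor
        · rw [abs_of_nonneg (by norm_num)]; linarith
        · linarith

lemma step2 : setTadd (Set.Icc (0:ℝ≥0) 8) {1} = Set.Icc (0:ℝ≥0) 9 := by
  ext c
  rw [setTadd_mem, Set.mem_Icc]
  constructor
  · rintro ⟨a, ha, b, hb, h⟩
    rw [Set.mem_singleton_iff] at hb; subst hb
    rw [Set.mem_Icc] at ha
    refine ⟨zero_le, ?_⟩
    rw [← NNReal.coe_le_coe]
    have h8 : (a:ℝ) ≤ 8 := by exact_mod_cast ha.2
    have := h.2
    push_cast at this ⊢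
    linarith
  · rintro ⟨-, h9⟩
    refine ⟨min (c + 1) 8, ?_, 1, rfl, ?_⟩
    · rw [Set.mem_Icc]
      exact ⟨zero_le, min_le_right _ _⟩
    · rw [tadd_mem]
      have h9' : (c:ℝ) ≤ 9 := by exact_mod_cast h9
      have hmin : ((min (c + 1) 8 : ℝ≥0) : ℝ) = min ((c:ℝ) + 1) 8 := by push_cast; try ring_nf
      rw [hmin]
      push_cast
      rcases le_total ((c:ℝ) + 1) 8 with h | h
      · rw [min_eq_left h]
        constructor
        · rw [abs_of_nonneg (by linarith [NNReal.coe_nonneg c] : (0:ℝ) ≤ _)]; linarith [NNReal.coe_nonneg c]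
        · linarith
      · rw [min_eq_right h]
        constructor
        · rw [abs_of_nonneg (by norm_num)]; linarith
        · linarith


/-- the triangle hyperfield is not doubly distributive:
`(2⊞1)·(2⊞1) = [1,9]`, while `(2·2)⊞(2·1)⊞(1·2)⊞(1·1) = [0,9]`;
in particular these sets are not equal. -/
theorem triangle_not_doubly_distributive :
    Set.image2 (· * ·) (tadd 2 1) (tadd 2 1) = Set.Icc (1 : ℝ≥0) 9 ∧
    setTadd (setTadd (tadd (2 * 2) (2 * 1)) {1 * 2}) {1 * 1} = Set.Icc (0 : ℝ≥0) 9 ∧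
    Set.image2 (· * ·) (tadd 2 1) (tadd 2 1) ≠
      setTadd (setTadd (tadd (2 * 2) (2 * 1)) {1 * 2}) {1 * 1} := by
  have e1 : Set.image2 (· * ·) (tadd 2 1) (tadd 2 1) = Set.Icc (1 : ℝ≥0) 9 := by
    rw [tadd21]; exact img
  have e2 : setTadd (setTadd (tadd (2 * 2) (2 * 1)) {1 * 2}) {1 * 1}
      = Set.Icc (0 : ℝ≥0) 9 := by
    norm_num
    rw [tadd42, step1, step2]
  refine ⟨e1, e2, ?_⟩
  rw [e1, e2]
  intro h
  have h0 : (0:ℝ≥0) ∈ Set.Icc (0:ℝ≥0) 9 := by simp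
  rw [← h, Set.mem_Icc] at h0
  exact absurd h0.1 (by norm_num)
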